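/- arXiv:0907.2910 — 4 statements merged into one kernel-verified Lean document; each statement's English description precedes it below -/
import Mathlib

section
/- For ρ ∈ (0,1), the function u ↦ ((1+√ρ e^{−u})/(√ρ+e^{−u}))² · e^{−2√ρ x sinh u} (for fixed x with 0 < x < (1−√ρ)/(√ρ(1+√ρ))) takes the value 1 at exactly one point u > 0. That is, the equation ((1+√ρ e^{−u})/(√ρ+e^{−u}))² = e^{2√ρ x sinh u} has a unique positive root u(x). -/
open Real

noncomputable def auxF (s x u : ℝ) : ℝ :=
  2 * (Real.log (1 + s * Real.exp (-u)) - Real.log (s + Real.exp (-u)))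
    - 2 * s * x * Real.sinh u

noncomputable def auxH (s x u : ℝ) : ℝ :=
  2 * (1 - s ^ 2) / (2 * s * Real.cosh u + 1 + s ^ 2) - 2 * s * x * Real.cosh u

lemma auxF_hasDerivAt (s x : ℝ) (hs0 : 0 < s) (u : ℝ) :
    HasDerivAt (auxF s x) (auxH s x u) u := by
  have ht : 0 < Real.exp (-u) := Real.exp_pos _
  have h1 : 0 < 1 + s * Real.exp (-u) := by positivity
  have h2 : 0 < s + Real.exp (-u) := by positivity
  have hexp : HasDerivAt (fun u : ℝ => Real.exp (-u)) (-Real.exp (-u)) u := by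
    simpa [Function.comp_def] using ((Real.hasDerivAt_exp (-u)).comp u (hasDerivAt_neg u))
  have hA : HasDerivAt (fun u : ℝ => 1 + s * Real.exp (-u)) (s * -Real.exp (-u)) u :=
    (hexp.const_mul s).const_add 1
  have hB : HasDerivAt (fun u : ℝ => s + Real.exp (-u)) (-Real.exp (-u)) u :=
    hexp.const_add s
  have hlogA : HasDerivAt (fun u : ℝ => Real.log (1 + s * Real.exp (-u)))
      ((s * -Real.exp (-u)) / (1 + s * Real.exp (-u))) u := by
    simpa [div_eq_mul_inv, mul_comm, Function.comp_def] using (Real.hasDerivAt_log h1.ne').comp u hA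
  have hlogB : HasDerivAt (fun u : ℝ => Real.log (s + Real.exp (-u)))
      ((-Real.exp (-u)) / (s + Real.exp (-u))) u := by
    simpa [div_eq_mul_inv, mul_comm, Function.comp_def] using (Real.hasDerivAt_log h2.ne').comp u hB
  have hsinh : HasDerivAt Real.sinh (Real.cosh u) u := Real.hasDerivAt_sinh u
  have hF : HasDerivAt (auxF s x)
      (2 * ((s * -Real.exp (-u)) / (1 + s * Real.exp (-u))
        - (-Real.exp (-u)) / (s + Real.exp (-u))) - 2 * s * x * Real.cosh u) u := by
    exact ((hlogA.sub hlogB).const_mul 2).sub (hsinh.const_mul (2 * s * x))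
  convert hF using 1
  have hc : Real.cosh u = (Real.exp u + Real.exp (-u)) / 2 := Real.cosh_eq u
  have he : Real.exp u * Real.exp (-u) = 1 := by
    rw [← Real.exp_add]; simp
  have hD : 0 < 2 * s * Real.cosh u + 1 + s ^ 2 := by
    have : 1 ≤ Real.cosh u := Real.one_le_cosh u
    nlinarith
  have hP : Real.exp (-u) * (2 * s * Real.cosh u + 1 + s ^ 2)
      = (1 + s * Real.exp (-u)) * (s + Real.exp (-u)) := by
    rw [hc]; linear_combination s * he
  have hQ : 2 * Real.cosh u * Real.exp (-u) = 1 + Real.exp (-u) ^ 2 := by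
    rw [hc]; linear_combination he
  unfold auxH
  field_simp
  linear_combination (2 * (1 - s ^ 2)) * hP - (3 * s * (1 - s ^ 2)) * hQ

lemma auxH_strictAnti (s x : ℝ) (hs0 : 0 < s) (hs1 : s < 1) (hx : 0 < x) :
    StrictAntiOn (auxH s x) (Set.Ici 0) := by
  intro a ha b hb hab
  have hca : 1 ≤ Real.cosh a := Real.one_le_cosh a
  have hcc : Real.cosh a < Real.cosh b := by
    rw [Real.cosh_lt_cosh]
    rwa [abs_of_nonneg ha, abs_of_nonneg (le_of_lt (lt_of_le_of_lt ha hab))]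
  have hDa : 0 < 2 * s * Real.cosh a + 1 + s ^ 2 := by nlinarith
  have hDb : 0 < 2 * s * Real.cosh b + 1 + s ^ 2 := by nlinarith
  unfold auxH
  have h1 : 2 * (1 - s ^ 2) / (2 * s * Real.cosh b + 1 + s ^ 2)
      < 2 * (1 - s ^ 2) / (2 * s * Real.cosh a + 1 + s ^ 2) := by
    apply div_lt_div_of_pos_left (by nlinarith) hDa (by nlinarith)
  have h2 : 2 * s * x * Real.cosh a < 2 * s * x * Real.cosh b := by
    have : 0 < 2 * s * x := by positivity
    exact (mul_lt_mul_iff_right₀ this).mpr hcc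
  linarith

lemma auxF_continuous (s x : ℝ) (hs0 : 0 < s) : Continuous (auxF s x) := by
  unfold auxF
  have h1 : ∀ u : ℝ, (1 : ℝ) + s * Real.exp (-u) ≠ 0 := fun u => by
    have := Real.exp_pos (-u); positivity
  have h2 : ∀ u : ℝ, s + Real.exp (-u) ≠ 0 := fun u => by
    have := Real.exp_pos (-u); positivity
  have hc1 : Continuous fun u : ℝ => (1 : ℝ) + s * Real.exp (-u) := by continuity
  have hc2 : Continuous fun u : ℝ => s + Real.exp (-u) := by continuity
  exact (continuous_const.mul ((hc1.log h1).sub (hc2.log h2))).sub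
    (continuous_const.mul Real.continuous_sinh)

/-- for `0 < x < x*`, the equation
`((1+√ρ e^{−u})/(√ρ+e^{−u}))² = e^{2√ρ x sinh u}` has a unique positive root. -/
theorem stmt9 (ρ x : ℝ) (hρ : ρ ∈ Set.Ioo (0:ℝ) 1)
    (hx : 0 < x) (hx' : x < (1 - Real.sqrt ρ) / (Real.sqrt ρ * (1 + Real.sqrt ρ))) :
    ∃! u : ℝ, 0 < u ∧
      ((1 + Real.sqrt ρ * Real.exp (-u)) / (Real.sqrt ρ + Real.exp (-u))) ^ 2
        = Real.exp (2 * Real.sqrt ρ * x * Real.sinh u) := by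
  obtain ⟨hρ0, hρ1⟩ := hρ
  set s := Real.sqrt ρ with hsdef
  have hs0 : 0 < s := Real.sqrt_pos.mpr hρ0
  have hs1 : s < 1 := by
    have h := Real.sqrt_lt_sqrt hρ0.le hρ1
    simpa [hsdef] using h
  -- the equation is equivalent to auxF s x u = 0
  have key : ∀ u : ℝ,
      (((1 + s * Real.exp (-u)) / (s + Real.exp (-u))) ^ 2
        = Real.exp (2 * s * x * Real.sinh u)) ↔ auxF s x u = 0 := by
    intro u
    have ht : 0 < Real.exp (-u) := Real.exp_pos _
    have h1 : 0 < 1 + s * Real.exp (-u) := by positivity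
    have h2 : 0 < s + Real.exp (-u) := by positivity
    have hA : 0 < ((1 + s * Real.exp (-u)) / (s + Real.exp (-u))) ^ 2 := by positivity
    constructor
    · intro h
      have h' := congrArg Real.log h
      rw [Real.log_exp, Real.log_pow, Real.log_div h1.ne' h2.ne'] at h'
      unfold auxF
      push_cast at h'
      linarith
    · intro h
      have hlog : Real.log (((1 + s * Real.exp (-u)) / (s + Real.exp (-u))) ^ 2)
          = 2 * s * x * Real.sinh u := by
        rw [Real.log_pow, Real.log_div h1.ne' h2.ne']
        unfold auxF at h
        push_cast
        linarith
      rw [← hlog, Real.exp_log hA]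
  have hF0 : auxF s x 0 = 0 := by
    simp [auxF, Real.sinh_zero, add_comm]
  have hH0 : 0 < auxH s x 0 := by
    have hx2 : x * (s * (1 + s)) < 1 - s := by
      rwa [lt_div_iff₀ (by positivity)] at hx'
    unfold auxH
    rw [Real.cosh_zero, sub_pos, div_eq_mul_inv, ← div_eq_mul_inv,
      lt_div_iff₀ (by nlinarith)]
    nlinarith [mul_lt_mul_of_pos_left hx2 (by positivity : (0:ℝ) < 2 * (1 + s))]
  have hcont := auxF_continuous s x hs0
  -- a point δ > 0 with auxF s x δ > 0
  have hd0 : HasDerivAt (auxF s x) (auxH s x 0) 0 := auxF_hasDerivAt s x hs0 0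
  rw [hasDerivAt_iff_tendsto_slope] at hd0
  have hev : ∀ᶠ δ in nhdsWithin (0:ℝ) {(0:ℝ)}ᶜ, 0 < slope (auxF s x) 0 δ :=
    hd0.eventually (eventually_gt_nhds hH0)
  have hev' : ∀ᶠ δ in nhdsWithin (0:ℝ) (Set.Ioi 0), 0 < slope (auxF s x) 0 δ :=
    hev.filter_mono (nhdsWithin_mono 0 (fun y hy => ne_of_gt hy))
  obtain ⟨δ, hslope, hδmem⟩ := (hev'.and eventually_mem_nhdsWithin).exists
  have hδpos : 0 < δ := hδmem
  have hFδ : 0 < auxF s x δ := by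
    rw [slope_def_field, hF0, sub_zero, sub_zero] at hslope
    rcases div_pos_iff.mp hslope with ⟨h, _⟩ | ⟨_, h⟩
    · exact h
    · linarith
  -- a point U > δ with auxF s x U < 0
  set C := Real.log (1 + s) - Real.log s with hCdef
  have hC : 0 < C := by
    have : Real.log s < Real.log (1 + s) := Real.log_lt_log hs0 (by linarith)
    linarith
  set U := max (δ + 1) (2 * C / (s * x) + 1) with hUdef
  have hδU : δ < U := lt_of_lt_of_le (by linarith) (le_max_left _ _)
  have hU0 : 0 < U := lt_trans hδpos hδU
  have hsinhU : C / (s * x) < Real.sinh U := by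
    have h1 : 2 * C / (s * x) + 1 ≤ U := le_max_right _ _
    have h2 : U / 2 ≤ Real.sinh U := by
      rw [Real.sinh_eq]
      have ha := Real.add_one_le_exp U
      have hb : Real.exp (-U) ≤ 1 := Real.exp_le_one_iff.mpr (by linarith)
      linarith
    have h3 : 2 * C / (s * x) = 2 * (C / (s * x)) := by ring
    linarith
  have hFU : auxF s x U < 0 := by
    have hb1 : Real.log (1 + s * Real.exp (-U)) ≤ Real.log (1 + s) := by
      apply Real.log_le_log (by positivity)
      have : Real.exp (-U) ≤ 1 := Real.exp_le_one_iff.mpr (by linarith)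
      nlinarith
    have hb2 : Real.log s ≤ Real.log (s + Real.exp (-U)) := by
      apply Real.log_le_log hs0
      have := Real.exp_pos (-U); linarith
    have hbig : 2 * C < 2 * s * x * Real.sinh U := by
      have := (div_lt_iff₀ (by positivity : 0 < s * x)).mp hsinhU
      nlinarith
    unfold auxF
    have : Real.log (1 + s * Real.exp (-U)) - Real.log (s + Real.exp (-U)) ≤ C := by
      rw [hCdef]; linarith
    linarith
  -- IVT gives a root
  obtain ⟨u0, hu0mem, hu0⟩ := intermediate_value_Icc' hδU.le hcont.continuousOn
    (Set.mem_Icc.mpr ⟨hFU.le, hFδ.le⟩)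
  have hu0pos : 0 < u0 := lt_of_lt_of_le hδpos hu0mem.1
  -- uniqueness: no two positive roots
  have huniq : ∀ a b : ℝ, 0 < a → a < b → auxF s x a = 0 → auxF s x b = 0 → False := by
    intro a b ha hab hFa hFb
    have hderiv : ∀ c : ℝ, deriv (auxF s x) c = auxH s x c :=
      fun c => (auxF_hasDerivAt s x hs0 c).deriv
    obtain ⟨c1, hc1, hc1'⟩ := exists_deriv_eq_zero ha hcont.continuousOn
      (hF0.trans hFa.symm)
    obtain ⟨c2, hc2, hc2'⟩ := exists_deriv_eq_zero hab hcont.continuousOn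
      (hFa.trans hFb.symm)
    rw [hderiv] at hc1' hc2'
    have : auxH s x c2 < auxH s x c1 :=
      auxH_strictAnti s x hs0 hs1 hx (Set.mem_Ici.mpr hc1.1.le)
        (Set.mem_Ici.mpr (lt_trans ha hc2.1).le) (lt_trans hc1.2 hc2.1)
    rw [hc1', hc2'] at this
    exact lt_irrefl 0 this
  refine ⟨u0, ⟨hu0pos, (key u0).mpr hu0⟩, ?_⟩
  rintro v ⟨hvpos, hveq⟩
  have hFv := (key v).mp hveq
  rcases lt_trichotomy v u0 with h | h | h
  · exact ((huniq v u0 hvpos h hFv hu0)).elim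
  · exact h
  · exact ((huniq u0 v hu0pos h hu0 hFv)).elim
end

section
/- For v real with v ≠ 0 and X > 0, the equation ((2iv+1)/(2iv−1))² = e^{−2ivX} is equivalent to (4v²−1) sin(Xv) = 4v cos(Xv), which factors as [cos(Xv/2) − 2v sin(Xv/2)]·[2v cos(Xv/2) + sin(Xv/2)] = 0; hence the positive real roots are exactly the v > 0 satisfying cot(Xv/2) = 2v or tan(Xv/2) = −2v. -/
open Real Complex

/-- the eigenvalue equation `((2iv+1)/(2iv−1))² = e^{−2ivX}` is equivalent
to the real condition `(4v²−1) sin(Xv) = 4v cos(Xv)`, which factors; hence positive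
roots satisfy `cot(Xv/2) = 2v` or `tan(Xv/2) = −2v`. -/
theorem stmt10 (v X : ℝ) (hv : v ≠ 0) (hX : 0 < X) :
    (((2 * Complex.I * (v:ℂ) + 1) / (2 * Complex.I * (v:ℂ) - 1)) ^ 2
        = Complex.exp (-2 * Complex.I * (v:ℂ) * (X:ℂ)) ↔
      (4 * v ^ 2 - 1) * Real.sin (X * v) = 4 * v * Real.cos (X * v)) ∧
    ((4 * v ^ 2 - 1) * Real.sin (X * v) = 4 * v * Real.cos (X * v) ↔
      (Real.cos (X * v / 2) - 2 * v * Real.sin (X * v / 2)) *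
        (2 * v * Real.cos (X * v / 2) + Real.sin (X * v / 2)) = 0) ∧
    (0 < v →
      ((4 * v ^ 2 - 1) * Real.sin (X * v) = 4 * v * Real.cos (X * v) ↔
        Real.cot (X * v / 2) = 2 * v ∨ Real.tan (X * v / 2) = -2 * v)) := by
  -- half-angle rewriting data for parts 2 and 3
  have hhs := Real.sin_two_mul (X*v/2)
  have hhc := Real.cos_two_mul' (X*v/2)
  rw [show 2*(X*v/2) = X*v by ring] at hhs hhc
  have hpyth2 : Real.sin (X*v/2) ^ 2 + Real.cos (X*v/2) ^ 2 = 1 :=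
    Real.sin_sq_add_cos_sq _
  -- Part 2
  have part2 : ((4 * v ^ 2 - 1) * Real.sin (X * v) = 4 * v * Real.cos (X * v) ↔
      (Real.cos (X * v / 2) - 2 * v * Real.sin (X * v / 2)) *
        (2 * v * Real.cos (X * v / 2) + Real.sin (X * v / 2)) = 0) := by
    rw [hhs, hhc]
    constructor
    · intro h; linear_combination (-1/2)*h
    · intro h; linear_combination (-2)*h
  refine ⟨?_, part2, ?_⟩
  · -- Part 1
    have hden : (2 * Complex.I * (v:ℂ) - 1) ≠ 0 := by
      intro h
      have := congrArg Complex.re h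
      simp at this
    rw [div_pow, div_eq_iff (pow_ne_zero 2 hden)]
    have he : (-2 * Complex.I * (v:ℂ) * (X:ℂ)) = ((-(2*v*X):ℝ):ℂ) * Complex.I := by
      push_cast; ring
    rw [he, Complex.exp_mul_I, ← Complex.ofReal_cos, ← Complex.ofReal_sin]
    set a := Real.cos (-(2*v*X)) with ha
    set b := Real.sin (-(2*v*X)) with hb
    rw [Complex.ext_iff]
    simp [pow_two]
    have has : a = 1 - 2 * Real.sin (X*v)^2 := by
      rw [ha, Real.cos_neg, show (2*v*X) = 2*(X*v) by ring, Real.cos_two_mul,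
        ← Real.sin_sq_add_cos_sq (X*v)]; ring
    have hbs : b = -(2 * Real.sin (X*v) * Real.cos (X*v)) := by
      rw [hb, Real.sin_neg, show (2*v*X) = 2*(X*v) by ring, Real.sin_two_mul]
    have hpyth := Real.sin_sq_add_cos_sq (X*v)
    set s := Real.sin (X*v)
    set c := Real.cos (X*v)
    rw [has, hbs]
    constructor
    · rintro ⟨h1, h2⟩
      have hsA : s * ((4 * v^2 - 1) * s - 4 * v * c) = 0 := by linear_combination (-1/2)*h1
      have hcA : c * ((4 * v^2 - 1) * s - 4 * v * c) = 0 := by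
        linear_combination (-1/2)*h2 + (-4*v)*hpyth
      have key : ((4 * v^2 - 1) * s - 4 * v * c)^2 = 0 := by
        linear_combination (4*v^2-1)*hsA - 4*v*hcA
      have := pow_eq_zero_iff (n := 2) (by norm_num) |>.mp key
      linarith
    · intro h
      exact ⟨by linear_combination (-2*s)*h, by linear_combination (-2*c)*h + (-8*v)*hpyth⟩
  · -- Part 3
    intro hvpos
    rw [part2]
    set sh := Real.sin (X*v/2) with hsh
    set ch := Real.cos (X*v/2) with hch
    constructor
    · intro h
      rcases mul_eq_zero.mp h with h1 | h2
      · left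
        have hs0 : sh ≠ 0 := by
          intro h0
          rw [h0] at h1 hpyth2
          simp at h1
          rw [h1] at hpyth2
          norm_num at hpyth2
        rw [Real.cot_eq_cos_div_sin, ← hsh, ← hch, div_eq_iff hs0]
        linarith
      · right
        have hc0 : ch ≠ 0 := by
          intro h0
          rw [h0] at h2 hpyth2
          have : sh = 0 := by linarith
          rw [this] at hpyth2
          norm_num at hpyth2
        rw [Real.tan_eq_sin_div_cos, ← hsh, ← hch, div_eq_iff hc0]
        linarith
    · rintro (h | h)
      · have hs0 : sh ≠ 0 := by
          intro h0
          rw [Real.cot_eq_cos_div_sin, ← hsh, h0, div_zero] at h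
          linarith
        rw [Real.cot_eq_cos_div_sin, ← hsh, ← hch, div_eq_iff hs0] at h
        apply mul_eq_zero.mpr
        left; linarith
      · have hc0 : ch ≠ 0 := by
          intro h0
          rw [Real.tan_eq_sin_div_cos, ← hch, h0, div_zero] at h
          linarith
        rw [Real.tan_eq_sin_div_cos, ← hsh, ← hch, div_eq_iff hc0] at h
        apply mul_eq_zero.mpr
        right; linarith
end

section
/- For X > 0, the equation cot(Xv/2) = 2v has a unique solution v₁(X) in the interval (0, π/X), and for each integer n ≥ 1 the combined equation (4v²−1) sin(Xv) = 4v cos(Xv) has exactly one root vₙ(X) in the interval ((n−1)π/X, nπ/X). -/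
open Real

private lemma cot_eq_tan_shift (x : ℝ) : Real.cot x = Real.tan (π/2 - x) := by
  rw [Real.tan_pi_div_two_sub, Real.cot_eq_cos_div_sin, Real.tan_eq_sin_div_cos, inv_div]

private lemma cot_anti (k : ℤ) :
    StrictAntiOn Real.cot (Set.Ioo ((k:ℝ)*π) ((k:ℝ)*π + π)) := by
  have hπ := Real.pi_pos
  intro x hx y hy hxy
  have hx1 := hx.1; have hx2 := hx.2
  have hy1 := hy.1; have hy2 := hy.2
  have ex : Real.cot x = Real.tan (π/2 - x + (k:ℝ)*π) := by
    rw [Real.tan_add_int_mul_pi, cot_eq_tan_shift]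
  have ey : Real.cot y = Real.tan (π/2 - y + (k:ℝ)*π) := by
    rw [Real.tan_add_int_mul_pi, cot_eq_tan_shift]
  rw [ex, ey]
  apply Real.strictMonoOn_tan
  · exact ⟨by linarith, by linarith⟩
  · exact ⟨by linarith, by linarith⟩
  · linarith

private lemma ivt_sign {f : ℝ → ℝ} (hf : Continuous f) {a b : ℝ} (hab : a < b)
    (h1 : f a < 0) (h2 : 0 < f b) : ∃ v ∈ Set.Ioo a b, f v = 0 := by
  have := intermediate_value_Ioo hab.le hf.continuousOn (Set.mem_Ioo.2 ⟨h1, h2⟩)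
  obtain ⟨v, hv, hfv⟩ := this
  exact ⟨v, hv, hfv⟩

private lemma ivt_sign' {f : ℝ → ℝ} (hf : Continuous f) {a b : ℝ} (hab : a < b)
    (h1 : 0 < f a) (h2 : f b < 0) : ∃ v ∈ Set.Ioo a b, f v = 0 := by
  have := intermediate_value_Ioo' hab.le hf.continuousOn (Set.mem_Ioo.2 ⟨h2, h1⟩)
  obtain ⟨v, hv, hfv⟩ := this
  exact ⟨v, hv, hfv⟩

set_option maxHeartbeats 1000000 in
/-- uniqueness of the eigenvalues `vₙ(X)` in successive intervals. -/
theorem stmt11 (X : ℝ) (hX : 0 < X) :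
    (∃! v : ℝ, v ∈ Set.Ioo 0 (Real.pi / X) ∧ Real.cot (X * v / 2) = 2 * v) ∧
    ∀ n : ℕ, 1 ≤ n →
      ∃! v : ℝ, v ∈ Set.Ioo (((n:ℝ) - 1) * Real.pi / X) ((n:ℝ) * Real.pi / X) ∧
        (4 * v ^ 2 - 1) * Real.sin (X * v) = 4 * v * Real.cos (X * v) := by
  have hπ := Real.pi_pos
  have hπX : 0 < π / X := div_pos hπ hX
  constructor
  · -- Part 1 : cot (X v / 2) = 2 v on (0, π/X)
    -- existence
    set g : ℝ → ℝ := fun v => Real.cos (X*v/2) - 2*v*Real.sin (X*v/2) with hg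
    have hgc : Continuous g := by fun_prop
    have hga : g 0 = 1 := by simp [hg]
    have hXb : X*(π/X)/2 = π/2 := by field_simp
    have hgb : g (π/X) = -(2*(π/X)) := by
      simp [hg, hXb]
    obtain ⟨v, hvmem, hveq⟩ := ivt_sign' hgc hπX (by rw [hga]; norm_num)
      (by rw [hgb]; linarith)
    -- bounds for t = X v / 2
    have h1 : 0 < X*v := mul_pos hX hvmem.1
    have h2 : X*v < π := by
      have := (lt_div_iff₀ hX).1 hvmem.2
      linarith [this]
    have hsin : 0 < Real.sin (X*v/2) :=
      Real.sin_pos_of_pos_of_lt_pi (by linarith) (by linarith)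
    have hcot : Real.cot (X*v/2) = 2*v := by
      rw [Real.cot_eq_cos_div_sin, div_eq_iff hsin.ne']
      have := hveq
      simp only [hg] at this
      linarith
    have key : ∀ p q : ℝ, p ∈ Set.Ioo 0 (π/X) → q ∈ Set.Ioo 0 (π/X) →
        Real.cot (X*p/2) = 2*p → Real.cot (X*q/2) = 2*q → p < q → False := by
      intro p q hp hq hpe hqe hpq
      have hp1 : 0 < X*p := mul_pos hX hp.1
      have hp2 : X*p < π := by have := (lt_div_iff₀ hX).1 hp.2; linarith
      have hq1 : 0 < X*q := mul_pos hX hq.1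
      have hq2 : X*q < π := by have := (lt_div_iff₀ hX).1 hq.2; linarith
      have hmp : X*p/2 ∈ Set.Ioo (((0:ℤ):ℝ)*π) (((0:ℤ):ℝ)*π + π) := by
        constructor <;> push_cast <;> linarith
      have hmq : X*q/2 ∈ Set.Ioo (((0:ℤ):ℝ)*π) (((0:ℤ):ℝ)*π + π) := by
        constructor <;> push_cast <;> linarith
      have := cot_anti 0 hmp hmq (by nlinarith)
      rw [hpe, hqe] at this
      linarith
    refine ⟨v, ⟨hvmem, hcot⟩, ?_⟩
    intro y ⟨hymem, hyeq⟩
    rcases lt_trichotomy y v with h | h | h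
    · exact absurd (key y v hymem hvmem hyeq hcot h) (fun h => h)
    · exact h
    · exact absurd (key v y hvmem hymem hcot hyeq h) (fun h => h)
  · -- Part 2
    intro n hn
    set a : ℝ := ((n:ℝ) - 1) * π / X with ha
    set b : ℝ := (n:ℝ) * π / X with hb
    have hab : a < b := by
      rw [ha, hb, div_lt_div_iff₀ hX hX]
      nlinarith [hπ, hX]
    have h0a : 0 ≤ a := by
      rw [ha]
      have h1 : (1:ℝ) ≤ (n:ℝ) := by exact_mod_cast hn
      apply div_nonneg _ hX.le
      nlinarith [hπ]
    set f : ℝ → ℝ := fun v => (4*v^2 - 1) * Real.sin (X*v) - 4*v*Real.cos (X*v) with hf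
    have hfc : Continuous f := by fun_prop
    have hsinne : ∀ v ∈ Set.Ioo a b, Real.sin (X*v) ≠ 0 := by
      intro v hv h
      obtain ⟨m, hm⟩ := Real.sin_eq_zero_iff.1 h
      have h1 : ((n:ℝ)-1)*π < X*v := by
        rw [mul_comm X v]; exact (div_lt_iff₀ hX).1 hv.1
      have h2 : X*v < (n:ℝ)*π := by
        rw [mul_comm X v]; exact (lt_div_iff₀ hX).1 hv.2
      rw [← hm] at h1 h2
      have hm1 : ((n:ℝ)-1) < (m:ℝ) := lt_of_mul_lt_mul_right h1 hπ.le
      have hm2 : (m:ℝ) < (n:ℝ) := lt_of_mul_lt_mul_right h2 hπ.le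
      have hi1 : (n:ℤ) - 1 < m := by exact_mod_cast hm1
      have hi2 : m < (n:ℤ) := by exact_mod_cast hm2
      omega
    have hconv : ∀ v ∈ Set.Ioo a b,
        (4*v^2 - 1) * Real.sin (X*v) = 4*v*Real.cos (X*v) →
        Real.cot (X*v) = v - 1/(4*v) := by
      intro v hv he
      have hv0 : 0 < v := lt_of_le_of_lt h0a hv.1
      have hs := hsinne v hv
      rw [Real.cot_eq_cos_div_sin, div_eq_iff hs]
      have h4 : (4:ℝ)*v ≠ 0 := by positivity
      have hr : v - 1/(4*v) = (4*v^2 - 1)/(4*v) := by field_simp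
      rw [hr, div_mul_eq_mul_div, eq_div_iff h4]
      linarith [he]
    have huniq : ∀ p q : ℝ, p ∈ Set.Ioo a b → q ∈ Set.Ioo a b →
        Real.cot (X*p) = p - 1/(4*p) → Real.cot (X*q) = q - 1/(4*q) → p < q → False := by
      intro p q hp hq hpe hqe hpq
      have hp0 : 0 < p := lt_of_le_of_lt h0a hp.1
      have hq0 : 0 < q := lt_of_le_of_lt h0a hq.1
      set m : ℤ := (n:ℤ) - 1 with hmdef
      have hcast : ((m:ℤ):ℝ) = (n:ℝ) - 1 := by push_cast [hmdef]; ring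
      have hp1 : ((n:ℝ)-1)*π < X*p := by rw [mul_comm X p]; exact (div_lt_iff₀ hX).1 hp.1
      have hp2 : X*p < (n:ℝ)*π := by rw [mul_comm X p]; exact (lt_div_iff₀ hX).1 hp.2
      have hq1 : ((n:ℝ)-1)*π < X*q := by rw [mul_comm X q]; exact (div_lt_iff₀ hX).1 hq.1
      have hq2 : X*q < (n:ℝ)*π := by rw [mul_comm X q]; exact (lt_div_iff₀ hX).1 hq.2
      have hmp : X*p ∈ Set.Ioo ((m:ℝ)*π) ((m:ℝ)*π + π) := by
        rw [hcast]; constructor <;> nlinarith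
      have hmq : X*q ∈ Set.Ioo ((m:ℝ)*π) ((m:ℝ)*π + π) := by
        rw [hcast]; constructor <;> nlinarith
      have hlt := cot_anti m hmp hmq (by nlinarith)
      rw [hpe, hqe] at hlt
      have hinv : 1/(4*q) < 1/(4*p) := by
        apply one_div_lt_one_div_of_lt <;> linarith
      linarith
    -- Existence
    have hexists : ∃ v ∈ Set.Ioo a b, f v = 0 := by
      rcases eq_or_lt_of_le hn with h1 | h2
      · -- n = 1
        have hn1 : n = 1 := h1.symm
        subst hn1
        have ha0 : a = 0 := by rw [ha]; norm_num
        set v₀ : ℝ := min (1/4) (π/(4*X)) with hv₀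
        have hv₀pos : 0 < v₀ := lt_min (by norm_num) (by positivity)
        have hv₀le : v₀ ≤ 1/4 := min_le_left _ _
        have hXv₀ : X*v₀ ≤ π/4 := by
          calc X*v₀ ≤ X*(π/(4*X)) := by
                apply mul_le_mul_of_nonneg_left (min_le_right _ _) hX.le
            _ = π/4 := by field_simp
        have hXv₀pos : 0 < X*v₀ := mul_pos hX hv₀pos
        have hsin0 : 0 < Real.sin (X*v₀) :=
          Real.sin_pos_of_pos_of_lt_pi hXv₀pos (by linarith)
        have hcos0 : 0 < Real.cos (X*v₀) :=
          Real.cos_pos_of_mem_Ioo ⟨by linarith, by linarith⟩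
        have hfv₀ : f v₀ < 0 := by
          have h4 : 4*v₀^2 - 1 < 0 := by nlinarith
          have t1 : (4*v₀^2-1) * Real.sin (X*v₀) < 0 := mul_neg_of_neg_of_pos h4 hsin0
          have t2 : 0 < 4*v₀*Real.cos (X*v₀) := by positivity
          simp only [hf]
          linarith
        have hXb' : X*b = π := by rw [hb]; field_simp; simp
        have hfb : f b = 4*b := by
          simp only [hf, hXb', Real.sin_pi, Real.cos_pi]
          ring
        have hbpos : 0 < b := by rw [hb]; positivity
        have hv₀b : v₀ < b := by
          have : π/(4*X) < π/X := by
            rw [div_lt_div_iff₀ (by positivity) hX]; nlinarith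
          calc v₀ ≤ π/(4*X) := min_le_right _ _
            _ < b := by rw [hb, Nat.cast_one, one_mul]; exact this
        obtain ⟨v, hv, hfv⟩ := ivt_sign hfc hv₀b hfv₀ (by rw [hfb]; linarith)
        exact ⟨v, ⟨by rw [ha0]; exact lt_trans hv₀pos hv.1, hv.2⟩, hfv⟩
      · -- n ≥ 2
        have hn2 : (2:ℝ) ≤ (n:ℝ) := by exact_mod_cast h2
        have hapos : 0 < a := by
          rw [ha]; apply div_pos _ hX; nlinarith
        have hbpos : 0 < b := lt_trans hapos hab
        set m : ℤ := (n:ℤ) - 1 with hmdef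
        have hcast : ((m:ℤ):ℝ) = (n:ℝ) - 1 := by push_cast [hmdef]; ring
        have hXa : X*a = ((n:ℝ)-1)*π := by rw [ha]; field_simp
        have hXb' : X*b = (n:ℝ)*π := by rw [hb]; field_simp
        have hsina : Real.sin (X*a) = 0 := by
          rw [hXa, ← hcast]; exact Real.sin_int_mul_pi m
        have hsinb : Real.sin (X*b) = 0 := by
          rw [hXb']
          have : (n:ℝ)*π = ((m+1 : ℤ):ℝ)*π := by push_cast [hmdef]; ring
          rw [this]; exact Real.sin_int_mul_pi (m+1)
        have hcosa : Real.cos (X*a) = (-1)^m := by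
          rw [hXa, ← hcast]
          simpa using Real.cos_int_mul_pi_sub 0 m
        have hcosb : Real.cos (X*b) = -(-1)^m := by
          rw [hXb']
          have e1 : (n:ℝ)*π = ((m:ℤ):ℝ)*π + π := by rw [hcast]; ring
          rw [e1, Real.cos_add_pi,
            show Real.cos (((m:ℤ):ℝ)*π) = (-1)^m from by
              simpa using Real.cos_int_mul_pi_sub 0 m]
        have hfa : f a = -4*a*(-1)^m := by simp only [hf, hsina, hcosa]; ring
        have hfb : f b = 4*b*(-1)^m := by simp only [hf, hsinb, hcosb]; ring
        rcases Int.even_or_odd m with he | ho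
        · have h1 : ((-1:ℝ))^m = 1 := he.neg_one_zpow
          obtain ⟨v, hv, hfv⟩ := ivt_sign hfc hab
            (by rw [hfa, h1]; linarith) (by rw [hfb, h1]; linarith)
          exact ⟨v, hv, hfv⟩
        · have h1 : ((-1:ℝ))^m = -1 := ho.neg_one_zpow
          obtain ⟨v, hv, hfv⟩ := ivt_sign' hfc hab
            (by rw [hfa, h1]; linarith) (by rw [hfb, h1]; linarith)
          exact ⟨v, hv, hfv⟩
    obtain ⟨v, hvmem, hfv⟩ := hexists
    have hveq : (4*v^2 - 1) * Real.sin (X*v) = 4*v*Real.cos (X*v) := by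
      simp only [hf] at hfv; linarith
    refine ⟨v, ⟨hvmem, hveq⟩, ?_⟩
    intro y ⟨hymem, hyeq⟩
    have hyc := hconv y hymem hyeq
    have hvc := hconv v hvmem hveq
    rcases lt_trichotomy y v with h | h | h
    · exact absurd (huniq y v hymem hvmem hyc hvc h) (fun h => h)
    · exact h
    · exact absurd (huniq v y hvmem hymem hvc hyc h) (fun h => h)
end

section
/- Let X > 0, V = V(X) ∈ (0, π/X) the unique root of cot(XV/2)=2V, and define k(X) = (X(1+4V²) + 4)/(2V²(1+4V²)). Then k is strictly increasing on (0,∞), k(X) → 0 as X → 0⁺, and k(X) → ∞ as X → ∞. Consequently, for every σ > 0 there is a unique X̃ > 0 with k(X̃) = σ. -/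
open Real Filter

lemma aux_tan13 {X W : ℝ} (hX : 0 < X) (hW : 0 < W) (hWπ : W < π / X)
    (hcot : Real.cot (X * W / 2) = 2 * W) :
    Real.tan (X * W / 2) = 1 / (2 * W) ∧ 0 < X * W / 2 ∧ X * W / 2 < π / 2 := by
  have hu0 : 0 < X * W / 2 := by positivity
  have hXW : X * W < π := by
    rw [lt_div_iff₀ hX] at hWπ; linarith [hWπ]
  have huπ : X * W / 2 < π / 2 := by linarith
  have hs : 0 < Real.sin (X * W / 2) :=
    Real.sin_pos_of_pos_of_lt_pi hu0 (by linarith [Real.pi_pos])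
  have hc : 0 < Real.cos (X * W / 2) :=
    Real.cos_pos_of_mem_Ioo ⟨by linarith, huπ⟩
  rw [Real.cot_eq_cos_div_sin] at hcot
  refine ⟨?_, hu0, huπ⟩
  rw [Real.tan_eq_sin_div_cos]
  field_simp at hcot ⊢
  nlinarith [hcot, hs, hW]

lemma aux_W_lt13 {u₁ u₂ W₁ W₂ : ℝ} (hW₁ : 0 < W₁) (hW₂ : 0 < W₂)
    (hu₁ : 0 < u₁) (hu₂ : u₂ < π / 2) (hu : u₁ < u₂)
    (ht₁ : Real.tan u₁ = 1 / (2 * W₁)) (ht₂ : Real.tan u₂ = 1 / (2 * W₂)) :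
    W₂ < W₁ := by
  have := Real.tan_lt_tan_of_lt_of_lt_pi_div_two
    (by linarith [Real.pi_pos] : -(π/2) < u₁) hu₂ hu
  rw [ht₁, ht₂] at this
  have h2 : 2 * W₂ < 2 * W₁ := by
    rw [div_lt_div_iff₀ (by positivity) (by positivity)] at this
    linarith
  linarith

lemma aux_arctan_le13 {t : ℝ} (ht : 0 < t) : Real.arctan t ≤ t := by
  have h1 : 0 < Real.arctan t := by
    rw [← Real.arctan_zero]; exact Real.arctan_strictMono ht
  have h2 := Real.lt_tan h1 (Real.arctan_lt_pi_div_two t)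
  rw [Real.tan_arctan] at h2; linarith

set_option maxHeartbeats 1000000 in
/-- monotonicity and limits of `k(X) = (X(1+4V²)+4)/(2V²(1+4V²))`,
hence unique solvability of `k(X̃) = σ`. -/
theorem stmt13 (V : ℝ → ℝ)
    (hV : ∀ X : ℝ, 0 < X →
      V X ∈ Set.Ioo 0 (Real.pi / X) ∧ Real.cot (X * V X / 2) = 2 * V X)
    (k : ℝ → ℝ)
    (hk : ∀ X : ℝ, k X =
      (X * (1 + 4 * (V X) ^ 2) + 4) / (2 * (V X) ^ 2 * (1 + 4 * (V X) ^ 2))) :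
    StrictMonoOn k (Set.Ioi 0) ∧
    Tendsto k (nhdsWithin 0 (Set.Ioi 0)) (nhds 0) ∧
    Tendsto k atTop atTop ∧
    ∀ σ : ℝ, 0 < σ → ∃! X : ℝ, 0 < X ∧ k X = σ := by
  have hW0 : ∀ X, 0 < X → 0 < V X := fun X hX => ((hV X hX).1).1
  have htan : ∀ X, 0 < X →
      Real.tan (X * V X / 2) = 1 / (2 * V X) ∧ 0 < X * V X / 2 ∧ X * V X / 2 < π / 2 :=
    fun X hX => aux_tan13 hX (hW0 X hX) ((hV X hX).1).2 ((hV X hX).2)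
  have hanti : ∀ X₁ X₂, 0 < X₁ → X₁ < X₂ → V X₂ < V X₁ := by
    intro X₁ X₂ hX₁ h12
    by_contra hcon
    push_neg at hcon
    have hX₂ : 0 < X₂ := lt_trans hX₁ h12
    obtain ⟨ht₁, hu₁0, hu₁π⟩ := htan X₁ hX₁
    obtain ⟨ht₂, hu₂0, hu₂π⟩ := htan X₂ hX₂
    have hu : X₁ * V X₁ / 2 < X₂ * V X₂ / 2 := by
      have h1 := hW0 X₁ hX₁; have h2 := hW0 X₂ hX₂; nlinarith
    exact absurd (aux_W_lt13 (hW0 X₁ hX₁) (hW0 X₂ hX₂) hu₁0 hu₂π hu ht₁ ht₂)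
      (not_lt.mpr hcon)
  have huniq : ∀ X W, 0 < X → 0 < W → W < π / X → Real.cot (X*W/2) = 2*W → W = V X := by
    intro X W hX hW hWπ hcot
    obtain ⟨htW, huW0, huWπ⟩ := aux_tan13 hX hW hWπ hcot
    obtain ⟨htV, huV0, huVπ⟩ := htan X hX
    rcases lt_trichotomy W (V X) with h | h | h
    · have hu : X*W/2 < X*(V X)/2 := by nlinarith
      exact absurd (aux_W_lt13 hW (hW0 X hX) huW0 huVπ hu htW htV) (by linarith)
    · exact h
    · have hu : X*(V X)/2 < X*W/2 := by nlinarith [hW0 X hX]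
      exact absurd (aux_W_lt13 (hW0 X hX) hW huV0 huWπ hu htV htW) (by linarith)
  have hksplit : ∀ X, 0 < X →
      k X = X/(2*(V X)^2) + 2/((V X)^2*(1+4*(V X)^2)) := by
    intro X hX
    have hW := hW0 X hX
    rw [hk]; field_simp; ring
  have hmono : StrictMonoOn k (Set.Ioi 0) := by
    intro X₁ hX₁ X₂ hX₂ h12
    simp only [Set.mem_Ioi] at hX₁ hX₂
    rw [hksplit X₁ hX₁, hksplit X₂ hX₂]
    have hV1 := hW0 X₁ hX₁; have hV2 := hW0 X₂ hX₂
    have hlt := hanti X₁ X₂ hX₁ h12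
    have hsq : (V X₂)^2 < (V X₁)^2 := by nlinarith
    have hsq4 : (V X₂)^4 < (V X₁)^4 := by nlinarith [sq_nonneg (V X₁), sq_nonneg (V X₂)]
    have h1 : X₁/(2*(V X₁)^2) < X₂/(2*(V X₂)^2) := by
      rw [div_lt_div_iff₀ (by positivity) (by positivity)]
      nlinarith [mul_lt_mul_of_pos_right h12 (by positivity : (0:ℝ) < 2*(V X₂)^2),
        mul_lt_mul_of_pos_left hsq hX₂]
    have h2 : 2/((V X₁)^2*(1+4*(V X₁)^2)) < 2/((V X₂)^2*(1+4*(V X₂)^2)) := by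
      rw [div_lt_div_iff₀ (by positivity) (by positivity)]
      nlinarith [hsq, hsq4]
    linarith
  have hzero : Tendsto k (nhdsWithin 0 (Set.Ioi 0)) (nhds 0) := by
    apply squeeze_zero' (g := fun X => 3*X^2)
    · filter_upwards [self_mem_nhdsWithin] with X hX
      simp only [Set.mem_Ioi] at hX
      rw [hksplit X hX]; have := hW0 X hX; positivity
    · filter_upwards [Ioo_mem_nhdsGT_of_mem
        (by constructor <;> norm_num : (0:ℝ) ∈ Set.Ico (0:ℝ) 1)] with X hX
      obtain ⟨hX0, hX1⟩ := hX
      have hW := hW0 X hX0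
      obtain ⟨ht, hu0, huπ⟩ := htan X hX0
      have hWhalf : 1/2 ≤ V X := by
        by_contra hcon; push_neg at hcon
        have hu14 : X * V X / 2 < π/4 := by nlinarith [Real.pi_gt_three]
        have hltt := Real.tan_lt_tan_of_lt_of_lt_pi_div_two
          (by linarith [Real.pi_pos]) (by linarith [Real.pi_pos]) hu14
        rw [ht, Real.tan_pi_div_four] at hltt
        rw [div_lt_one (by positivity)] at hltt
        linarith
      have htle1 : Real.tan (X * V X / 2) ≤ 1 := by
        rw [ht, div_le_one (by positivity)]; linarith
      have hule1 : X * V X / 2 ≤ 1 := le_trans (Real.lt_tan hu0 huπ).le htle1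
      have hsin : Real.sin (X * V X / 2) ≤ X * V X / 2 := (Real.sin_lt hu0).le
      have hcos : 1/2 ≤ Real.cos (X * V X / 2) := by
        have := Real.one_sub_sq_div_two_le_cos (x := X * V X / 2)
        nlinarith
      have htan2u : Real.tan (X * V X / 2) ≤ X * V X := by
        rw [Real.tan_eq_sin_div_cos, div_le_iff₀ (by linarith)]
        nlinarith
      have hkey : 1 ≤ 2 * X * (V X)^2 := by
        rw [ht, div_le_iff₀ (by positivity)] at htan2u
        nlinarith
      rw [hksplit X hX0]
      have h1 : X/(2*(V X)^2) ≤ X^2 := by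
        rw [div_le_iff₀ (by positivity)]; nlinarith
      have h2 : 2/((V X)^2*(1+4*(V X)^2)) ≤ 2*X^2 := by
        rw [div_le_iff₀ (by positivity)]
        nlinarith [sq_nonneg (2*X*(V X)^2 - 1), sq_nonneg (X*(V X)), mul_pos hX0 hW]
      linarith
    · have hcont : Continuous (fun X : ℝ => 3*X^2) := by continuity
      have h := hcont.tendsto 0
      norm_num at h
      exact h.mono_left nhdsWithin_le_nhds
  have hatTop : Tendsto k atTop atTop := by
    have hc := hW0 1 one_pos
    apply tendsto_atTop_mono' atTop ?_
      (tendsto_id.atTop_div_const (by positivity : (0:ℝ) < 2*(V 1)^2))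
    filter_upwards [eventually_gt_atTop 1] with X hX1
    have hX : 0 < X := lt_trans one_pos hX1
    rw [hksplit X hX]
    have hVlt := hanti 1 X one_pos hX1
    have hVX := hW0 X hX
    have hle : X/(2*(V 1)^2) ≤ X/(2*(V X)^2) := by
      rw [div_le_div_iff₀ (by positivity) (by positivity)]
      have hsq : (V X)^2 ≤ (V 1)^2 := by nlinarith
      nlinarith [mul_le_mul_of_nonneg_left hsq hX.le]
    have hpos : 0 ≤ 2/((V X)^2*(1+4*(V X)^2)) := by positivity
    simpa using le_trans hle (by linarith)
  refine ⟨hmono, hzero, hatTop, ?_⟩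
  intro σ hσ
  set a := min (1/2 : ℝ) (3/(4*σ)) with ha
  set b := max (1 : ℝ) (1/σ) with hb
  have ha0 : 0 < a := lt_min (by norm_num) (by positivity)
  have ha12 : a ≤ 1/2 := min_le_left _ _
  have hb1 : (1:ℝ) ≤ b := le_max_left _ _
  have hb0 : 0 < b := lt_of_lt_of_le one_pos hb1
  have hab : a ≤ b := le_trans ha12 (by linarith)
  set K : ℝ → ℝ := fun v => Real.arctan (1/(2*v))/v^3 + 2/(v^2*(1+4*v^2)) with hKdef
  have hKcont : ContinuousOn K (Set.Icc a b) := by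
    apply ContinuousOn.add
    · apply ContinuousOn.div
      · apply Real.continuous_arctan.comp_continuousOn
        apply ContinuousOn.div continuousOn_const (by fun_prop)
        intro x hx; have hx0 := lt_of_lt_of_le ha0 hx.1; positivity
      · fun_prop
      · intro x hx; have hx0 := lt_of_lt_of_le ha0 hx.1; positivity
    · apply ContinuousOn.div continuousOn_const (by fun_prop)
      intro x hx; have hx0 := lt_of_lt_of_le ha0 hx.1; positivity
  have hKa : σ ≤ K a := by
    have haσ : a ≤ 3/(4*σ) := min_le_right _ _
    have harct : π/4 ≤ Real.arctan (1/(2*a)) := by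
      rw [← Real.arctan_one]
      apply Real.arctan_strictMono.monotone
      rw [le_div_iff₀ (by positivity)]; linarith
    have hπ : (3:ℝ)/4 ≤ π/4 := by linarith [Real.pi_gt_three]
    have ha3 : a^3 ≤ a := by
      nlinarith [mul_le_mul ha12 ha12 ha0.le (by norm_num : (0:ℝ) ≤ 1/2), ha0]
    have h1 : σ ≤ (3/4)/a := by
      rw [le_div_iff₀ ha0]
      have h := mul_le_mul_of_nonneg_left haσ hσ.le
      have heq : σ * (3/(4*σ)) = 3/4 := by field_simp
      linarith [h, heq]
    have h2 : (3/4 : ℝ)/a ≤ (3/4)/a^3 := by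
      rw [div_le_div_iff₀ ha0 (by positivity)]
      nlinarith [ha3]
    have h3 : (3/4 : ℝ)/a^3 ≤ Real.arctan (1/(2*a))/a^3 := by gcongr; linarith
    have h4 : 0 ≤ 2/(a^2*(1+4*a^2)) := by positivity
    simp only [hKdef]; linarith
  have hKb : K b ≤ σ := by
    have hbσ : 1/σ ≤ b := le_max_right _ _
    have harc : Real.arctan (1/(2*b)) ≤ 1/(2*b) := aux_arctan_le13 (by positivity)
    have hfirst : Real.arctan (1/(2*b))/b^3 ≤ 1/(2*b^4) := by
      rw [div_le_div_iff₀ (by positivity) (by positivity)]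
      have h2 := mul_le_mul_of_nonneg_right harc (by positivity : (0:ℝ) ≤ 2*b^4)
      have heq : 1/(2*b)*(2*b^4) = b^3 := by field_simp
      linarith [h2, heq]
    have hsecond : 2/(b^2*(1+4*b^2)) ≤ 1/(2*b^4) := by
      rw [div_le_div_iff₀ (by positivity) (by positivity)]; nlinarith
    have hsum : K b ≤ 1/b^4 := by
      have : 1/(2*b^4) + 1/(2*b^4) = 1/b^4 := by ring
      simp only [hKdef]; linarith
    have hb2 : 1 ≤ b^2 := by nlinarith
    have hbb : b ≤ b^2 := by nlinarith
    have hbb2 : b^2 ≤ b^4 := by nlinarith [hb2, sq_nonneg b]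
    have h5 : 1/b^4 ≤ 1/b := by
      rw [div_le_div_iff₀ (by positivity) hb0]; nlinarith
    have h6 : 1/b ≤ σ := by
      rw [div_le_iff₀ hb0]
      rw [div_le_iff₀ hσ] at hbσ
      nlinarith
    exact le_trans hsum (le_trans h5 h6)
  obtain ⟨v, hv_mem, hKv⟩ := intermediate_value_Icc' hab hKcont ⟨hKb, hKa⟩
  have hv0 : 0 < v := lt_of_lt_of_le ha0 hv_mem.1
  set u := Real.arctan (1/(2*v)) with hudef
  have hu0 : 0 < u := by
    rw [hudef, ← Real.arctan_zero]; exact Real.arctan_strictMono (by positivity)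
  have huπ : u < π/2 := Real.arctan_lt_pi_div_two _
  set Xs := 2*u/v with hXsdef
  have hXs0 : 0 < Xs := by positivity
  have huXs : Xs * v / 2 = u := by rw [hXsdef, div_mul_cancel₀ _ hv0.ne']; ring
  have htanu : Real.tan u = 1/(2*v) := Real.tan_arctan _
  have hsinu : 0 < Real.sin u := Real.sin_pos_of_pos_of_lt_pi hu0 (by linarith [Real.pi_pos])
  have hcosu : 0 < Real.cos u := Real.cos_pos_of_mem_Ioo ⟨by linarith [Real.pi_pos], huπ⟩
  have hcot : Real.cot (Xs * v / 2) = 2*v := by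
    rw [huXs, Real.cot_eq_cos_div_sin]
    rw [Real.tan_eq_sin_div_cos] at htanu
    field_simp at htanu ⊢
    try linarith
  have hvπ : v < π / Xs := by
    rw [lt_div_iff₀ hXs0]
    have hXv : v * Xs = 2*u := by rw [hXsdef, mul_comm, div_mul_cancel₀ _ hv0.ne']
    rw [hXv]; linarith
  have hVXs : V Xs = v := (huniq Xs v hXs0 hv0 hvπ hcot).symm
  have hkXs : k Xs = σ := by
    rw [hksplit Xs hXs0, hVXs, ← hKv]
    simp only [hKdef, hXsdef]
    field_simp
    ring
  refine ⟨Xs, ⟨hXs0, hkXs⟩, ?_⟩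
  rintro Y ⟨hY0, hkY⟩
  exact hmono.injOn (Set.mem_Ioi.mpr hY0) (Set.mem_Ioi.mpr hXs0) (hkY.trans hkXs.symm)
end
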